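/- Let I be an ideal on ω^Ω and D : Borel(ω^Ω) → Borel(ω^Ω) a map such that A △ B ∈ I implies D(A) = D(B). If D is I-compatible (A \ B ∈ I ⟹ D(A) \ D(B) ∈ I, and A ∩ B ∈ I ⟹ D(A) ∩ D(B) ∈ I) and I-positive (D(A) ∩ A ∉ I whenever A ∉ I), then D(A) △ A ∈ I for every Borel set A; and conversely. -/
import Mathlib


open Set

noncomputable section

/-- If `I` is an ideal on `ω^Ω` and `D` is a map on Borel sets that is invariant under
`I`-equivalence (`A △ B ∈ I ⟹ D(A) = D(B)`), then `D` is `I`-compatible and `I`-positive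
if and only if the density property `D(A) △ A ∈ I` holds for all Borel sets `A`. -/
theorem stmt5 {Ω : Type*} [MeasurableSpace Ω] (I : Set (Set (ℕ → Ω)))
    (hempty : ∅ ∈ I)
    (hdown : ∀ A B : Set (ℕ → Ω), A ∈ I → B ⊆ A → B ∈ I)
    (hunion : ∀ A B : Set (ℕ → Ω), A ∈ I → B ∈ I → A ∪ B ∈ I)
    (D : Set (ℕ → Ω) → Set (ℕ → Ω))
    (hDval : ∀ A : Set (ℕ → Ω), MeasurableSet A → MeasurableSet (D A))
    (hlift : ∀ A B : Set (ℕ → Ω), MeasurableSet A → MeasurableSet B →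
      symmDiff A B ∈ I → D A = D B) :
    ((∀ A B : Set (ℕ → Ω), MeasurableSet A → MeasurableSet B →
        ((A \ B ∈ I → D A \ D B ∈ I) ∧ (A ∩ B ∈ I → D A ∩ D B ∈ I))) ∧
      (∀ A : Set (ℕ → Ω), MeasurableSet A → A ∉ I → D A ∩ A ∉ I)) ↔
    (∀ A : Set (ℕ → Ω), MeasurableSet A → symmDiff (D A) A ∈ I) := by
  constructor
  · rintro ⟨hcompat, hpos⟩ A hA
    -- First: for every measurable A, A \ D A ∈ I
    have key : ∀ A : Set (ℕ → Ω), MeasurableSet A → A \ D A ∈ I := by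
      intro A hA
      by_contra hc
      have hB : MeasurableSet (A \ D A) := hA.diff (hDval A hA)
      have hposB := hpos _ hB hc
      have h1 : (A \ D A) \ A ∈ I := by
        rw [Set.diff_eq_empty.mpr diff_subset]; exact hempty
      have h2 : D (A \ D A) \ D A ∈ I := (hcompat _ A hB hA).1 h1
      exact hposB (hdown _ _ h2 (fun x ⟨hx1, hx2⟩ => ⟨hx1, hx2.2⟩))
    have h2 := key Aᶜ hA.compl
    have h3 : D A ∩ D Aᶜ ∈ I := by
      refine (hcompat A Aᶜ hA hA.compl).2 ?_
      rw [inter_compl_self]; exact hempty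
    have h4 : D A \ A ∈ I := by
      refine hdown _ _ (hunion _ _ h3 h2) ?_
      intro x ⟨hx1, hx2⟩
      by_cases h : x ∈ D Aᶜ
      · exact Or.inl ⟨hx1, h⟩
      · exact Or.inr ⟨hx2, h⟩
    rw [Set.symmDiff_def]
    exact hunion _ _ h4 (key A hA)
  · intro hdens
    constructor
    · intro A B hA hB
      have hdA := hdens A hA
      have hdB := hdens B hB
      constructor
      · intro hAB
        refine hdown _ _ (hunion _ _ (hunion _ _ hdA hAB) hdB) ?_
        intro x ⟨hx1, hx2⟩
        by_cases hxA : x ∈ A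
        · by_cases hxB : x ∈ B
          · exact Or.inr (Or.inr ⟨hxB, hx2⟩)
          · exact Or.inl (Or.inr ⟨hxA, hxB⟩)
        · exact Or.inl (Or.inl (Or.inl ⟨hx1, hxA⟩))
      · intro hAB
        refine hdown _ _ (hunion _ _ (hunion _ _ hdA hAB) hdB) ?_
        intro x ⟨hx1, hx2⟩
        by_cases hxA : x ∈ A
        · by_cases hxB : x ∈ B
          · exact Or.inl (Or.inr ⟨hxA, hxB⟩)
          · exact Or.inr (Or.inl ⟨hx2, hxB⟩)
        · exact Or.inl (Or.inl (Or.inl ⟨hx1, hxA⟩))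
    · intro A hA hAnI hc
      apply hAnI
      refine hdown _ _ (hunion _ _ (hdens A hA) hc) ?_
      intro x hx
      by_cases h : x ∈ D A
      · exact Or.inr ⟨h, hx⟩
      · exact Or.inl (Or.inr ⟨hx, h⟩)
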